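/- Let X be a measurable space, n ≥ 1, K ≥ 1, let s : Fin n → X → ℝ be measurable functions with values in [0,1], let α : Fin n → ℝ be a probability vector, and define f x = ∑ i, α i * s i x and, for ω : Fin K → Fin n, g_ω x = (1/K) * ∑ j, s (ω j) x. Let S be any probability measure on X × ({0,1} with the discrete σ-algebra), let τ ∈ (0,1), and for F : X → ℝ define the margin m_F(x,y) = (y − τ) * (F x − τ). Then for every θ > 0: ∫ S{(x,y) : m_{g_ω}(x,y) ≤ θ/2} dμ(ω) ≤ S{(x,y) : m_f(x,y) ≤ θ} + exp(−K θ² / 2), where μ is the K-fold product of the probability mass function α on Fin n. -/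

import Mathlib

open MeasureTheory

lemma hoeff_key (p : ℝ) (hp0 : 0 ≤ p) (hp1 : p ≤ 1) (x : ℝ) :
    Real.log (1 - p + p * Real.exp x) ≤ p * x + x ^ 2 / 8 := by
  have hD : ∀ y : ℝ, 0 < 1 - p + p * Real.exp y := by
    intro y
    rcases eq_or_lt_of_le hp0 with h | h
    · simp [← h]
    · have := Real.exp_pos y
      nlinarith
  set F : ℝ → ℝ := fun y => p * y + y ^ 2 / 8 - Real.log (1 - p + p * Real.exp y) with hF
  set F' : ℝ → ℝ := fun y => p + y / 4 - p * Real.exp y / (1 - p + p * Real.exp y) with hF'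
  have hDd : ∀ y : ℝ, HasDerivAt (fun y => 1 - p + p * Real.exp y) (p * Real.exp y) y := by
    intro y
    exact ((Real.hasDerivAt_exp y).const_mul p).const_add (1 - p)
  have hFd : ∀ y : ℝ, HasDerivAt F (F' y) y := by
    intro y
    have h1 : HasDerivAt (fun y : ℝ => p * y + y ^ 2 / 8) (p + y / 4) y := by
      have := ((hasDerivAt_id y).const_mul p).add ((hasDerivAt_pow 2 y).div_const 8)
      exact this.congr_deriv (by ring)
    have h2 : HasDerivAt (fun y => Real.log (1 - p + p * Real.exp y))
        (p * Real.exp y / (1 - p + p * Real.exp y)) y := (hDd y).log (hD y).ne'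
    exact h1.sub h2
  have hF'd : ∀ y : ℝ, HasDerivAt F'
      (1 / 4 - (p * Real.exp y * (1 - p + p * Real.exp y) -
        p * Real.exp y * (p * Real.exp y)) / (1 - p + p * Real.exp y) ^ 2) y := by
    intro y
    have h1 : HasDerivAt (fun y : ℝ => p + y / 4) (1 / 4) y := by
      simpa using ((hasDerivAt_id y).div_const 4).const_add p
    have h2 := ((Real.hasDerivAt_exp y).const_mul p).div (hDd y) (hD y).ne'
    exact h1.sub h2
  have hF'nonneg : ∀ y : ℝ, 0 ≤ 1 / 4 - (p * Real.exp y * (1 - p + p * Real.exp y) -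
        p * Real.exp y * (p * Real.exp y)) / (1 - p + p * Real.exp y) ^ 2 := by
    intro y
    set D := 1 - p + p * Real.exp y with hDdef
    set g := p * Real.exp y with hg
    have hDpos : 0 < D := hD y
    have : (g * D - g * g) / D ^ 2 ≤ 1 / 4 := by
      rw [div_le_iff₀ (by positivity)]
      nlinarith [sq_nonneg (D - 2 * g)]
    linarith
  have hF'mono : Monotone F' := by
    apply monotone_of_deriv_nonneg
    · exact fun y => (hF'd y).differentiableAt
    · intro y
      rw [(hF'd y).deriv]
      exact hF'nonneg y
  have hF'0 : F' 0 = 0 := by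
    simp [hF']
  have hF0 : F 0 = 0 := by
    have : 1 - p + p * Real.exp 0 = 1 := by simp
    simp [hF, this]
  have hFcont : Continuous F := by
    have : Differentiable ℝ F := fun y => (hFd y).differentiableAt
    exact this.continuous
  have hderivF : ∀ y : ℝ, deriv F y = F' y := fun y => (hFd y).deriv
  have hfinal : 0 ≤ F x := by
    rcases le_or_gt 0 x with hx | hx
    · have hmono : MonotoneOn F (Set.Ici 0) := by
        apply monotoneOn_of_deriv_nonneg (convex_Ici 0) (hFcont.continuousOn)
        · intro y hy
          exact (hFd y).differentiableAt.differentiableWithinAt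
        · intro y hy
          rw [hderivF y]
          have : (0:ℝ) ≤ y := le_of_lt (by simpa using hy)
          calc (0:ℝ) = F' 0 := hF'0.symm
            _ ≤ F' y := hF'mono this
      have := hmono (Set.self_mem_Ici) (Set.mem_Ici.2 hx) hx
      linarith [hF0 ▸ this]
    · have hanti : AntitoneOn F (Set.Iic 0) := by
        apply antitoneOn_of_deriv_nonpos (convex_Iic 0) (hFcont.continuousOn)
        · intro y hy
          exact (hFd y).differentiableAt.differentiableWithinAt
        · intro y hy
          rw [hderivF y]
          have : y ≤ (0:ℝ) := le_of_lt (by simpa using hy)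
          calc F' y ≤ F' 0 := hF'mono this
            _ = 0 := hF'0
      have := hanti (Set.mem_Iic.2 hx.le) (Set.self_mem_Iic) hx.le
      linarith [hF0 ▸ this]
  have := hfinal
  simp only [hF] at this
  linarith

lemma mgf_bound {n : ℕ} (α z : Fin n → ℝ) (hα0 : ∀ i, 0 ≤ α i) (hα1 : ∑ i, α i = 1)
    (hz : ∀ i, z i ∈ Set.Icc (0:ℝ) 1) (t : ℝ) :
    ∑ i, α i * Real.exp (t * (z i - ∑ j, α j * z j)) ≤ Real.exp (t ^ 2 / 8) := by
  set m := ∑ j, α j * z j with hm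
  have hm0 : 0 ≤ m := Finset.sum_nonneg fun i _ => mul_nonneg (hα0 i) (hz i).1
  have hm1 : m ≤ 1 := by
    calc m ≤ ∑ j, α j := Finset.sum_le_sum fun i _ => by
            nlinarith [(hz i).2, hα0 i]
      _ = 1 := hα1
  have hconv : ∀ i, Real.exp (t * z i) ≤ 1 - z i + z i * Real.exp t := by
    intro i
    have h := convexOn_exp.2 (Set.mem_univ (0:ℝ)) (Set.mem_univ t)
      (by linarith [(hz i).2] : (0:ℝ) ≤ 1 - z i) (hz i).1 (by ring)
    simpa [smul_eq_mul, mul_comm] using h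
  have step1 : ∑ i, α i * Real.exp (t * (z i - m))
      ≤ Real.exp (-(t * m)) * (1 - m + m * Real.exp t) := by
    have : ∀ i, α i * Real.exp (t * (z i - m))
        = Real.exp (-(t * m)) * (α i * Real.exp (t * z i)) := by
      intro i
      rw [mul_comm (Real.exp (-(t * m))), mul_assoc, ← Real.exp_add]
      ring_nf
    rw [Finset.sum_congr rfl fun i _ => this i, ← Finset.mul_sum]
    apply mul_le_mul_of_nonneg_left _ (Real.exp_pos _).le
    calc ∑ i, α i * Real.exp (t * z i)
        ≤ ∑ i, α i * (1 - z i + z i * Real.exp t) :=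
          Finset.sum_le_sum fun i _ => mul_le_mul_of_nonneg_left (hconv i) (hα0 i)
      _ = 1 - m + m * Real.exp t := by
          simp only [mul_add, mul_sub, mul_one, Finset.sum_add_distrib, Finset.sum_sub_distrib]
          rw [hα1]
          rw [Finset.sum_congr rfl (fun i _ => by ring : ∀ i ∈ Finset.univ, α i * (z i * Real.exp t) = Real.exp t * (α i * z i))]
          rw [← Finset.mul_sum, ← hm]
          ring
  have hpos : 0 < 1 - m + m * Real.exp t := by
    rcases eq_or_lt_of_le hm0 with h | h
    · simp [← h]
    · nlinarith [Real.exp_pos t]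
  have step2 : 1 - m + m * Real.exp t ≤ Real.exp (m * t + t ^ 2 / 8) := by
    have := hoeff_key m hm0 hm1 t
    calc 1 - m + m * Real.exp t = Real.exp (Real.log (1 - m + m * Real.exp t)) :=
          (Real.exp_log hpos).symm
      _ ≤ Real.exp (m * t + t ^ 2 / 8) := Real.exp_le_exp.2 this
  calc ∑ i, α i * Real.exp (t * (z i - m))
      ≤ Real.exp (-(t * m)) * (1 - m + m * Real.exp t) := step1
    _ ≤ Real.exp (-(t * m)) * Real.exp (m * t + t ^ 2 / 8) :=
        mul_le_mul_of_nonneg_left step2 (Real.exp_pos _).le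
    _ = Real.exp (t ^ 2 / 8) := by rw [← Real.exp_add]; ring_nf

lemma chernoff {n K : ℕ} (α : Fin n → ℝ) (hα0 : ∀ i, 0 ≤ α i) (hα1 : ∑ i, α i = 1)
    (z : Fin n → ℝ) (hz : ∀ i, z i ∈ Set.Icc (0:ℝ) 1)
    (c θ : ℝ) (hθ : 0 < θ) (hc : c ^ 2 ≤ 1) :
    ∑ ω ∈ Finset.univ.filter (fun ω : Fin K → Fin n =>
        (K : ℝ) * θ / 2 ≤ ∑ j, c * ((∑ i, α i * z i) - z (ω j))),
      ∏ j, α (ω j) ≤ Real.exp (-((K : ℝ) * θ ^ 2) / 2) := by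
  classical
  set m := ∑ i, α i * z i with hm
  set lam := 2 * θ with hlam
  set W : Fin n → ℝ := fun i => c * (m - z i) with hW
  -- step 1 : restrict-to-all bound with exponential weight
  have h1 : ∑ ω ∈ Finset.univ.filter (fun ω : Fin K → Fin n =>
        (K : ℝ) * θ / 2 ≤ ∑ j, W (ω j)), ∏ j, α (ω j)
      ≤ ∑ ω : Fin K → Fin n,
          Real.exp (lam * (∑ j, W (ω j) - (K : ℝ) * θ / 2)) * ∏ j, α (ω j) := by
    rw [← Finset.sum_filter_add_sum_filter_not Finset.univ
      (fun ω : Fin K → Fin n => (K : ℝ) * θ / 2 ≤ ∑ j, W (ω j))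
      (fun ω => Real.exp (lam * (∑ j, W (ω j) - (K : ℝ) * θ / 2)) * ∏ j, α (ω j))]
    have h2 : ∀ ω ∈ Finset.univ.filter (fun ω : Fin K → Fin n =>
        (K : ℝ) * θ / 2 ≤ ∑ j, W (ω j)),
        ∏ j, α (ω j) ≤ Real.exp (lam * (∑ j, W (ω j) - (K : ℝ) * θ / 2)) * ∏ j, α (ω j) := by
      intro ω hω
      have hcond := (Finset.mem_filter.1 hω).2
      have hexp : (1:ℝ) ≤ Real.exp (lam * (∑ j, W (ω j) - (K : ℝ) * θ / 2)) := by
        rw [Real.one_le_exp_iff]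
        have : 0 ≤ ∑ j, W (ω j) - (K : ℝ) * θ / 2 := by linarith
        positivity
      nlinarith [Finset.prod_nonneg (fun j (_ : j ∈ Finset.univ) => hα0 (ω j)), hexp]
    have h3 : (0:ℝ) ≤ ∑ ω ∈ Finset.univ.filter (fun ω : Fin K → Fin n =>
        ¬ ((K : ℝ) * θ / 2 ≤ ∑ j, W (ω j))),
        Real.exp (lam * (∑ j, W (ω j) - (K : ℝ) * θ / 2)) * ∏ j, α (ω j) := by
      apply Finset.sum_nonneg
      intro ω _
      exact mul_nonneg (Real.exp_pos _).le (Finset.prod_nonneg fun j _ => hα0 (ω j))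
    calc ∑ ω ∈ Finset.univ.filter (fun ω : Fin K → Fin n =>
          (K : ℝ) * θ / 2 ≤ ∑ j, W (ω j)), ∏ j, α (ω j)
        ≤ ∑ ω ∈ Finset.univ.filter (fun ω : Fin K → Fin n =>
          (K : ℝ) * θ / 2 ≤ ∑ j, W (ω j)),
          Real.exp (lam * (∑ j, W (ω j) - (K : ℝ) * θ / 2)) * ∏ j, α (ω j) :=
          Finset.sum_le_sum h2
      _ ≤ _ := le_add_of_nonneg_right h3
  -- step 2 : factorize
  have h4 : ∑ ω : Fin K → Fin n,
        Real.exp (lam * (∑ j, W (ω j) - (K : ℝ) * θ / 2)) * ∏ j, α (ω j)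
      = Real.exp (-(lam * ((K : ℝ) * θ / 2))) * (∑ i, α i * Real.exp (lam * W i)) ^ K := by
    have hfac : ∀ ω : Fin K → Fin n,
        Real.exp (lam * (∑ j, W (ω j) - (K : ℝ) * θ / 2)) * ∏ j, α (ω j)
        = Real.exp (-(lam * ((K : ℝ) * θ / 2))) * ∏ j, α (ω j) * Real.exp (lam * W (ω j)) := by
      intro ω
      have hS : ∑ j, lam * W (ω j) = lam * ∑ j, W (ω j) :=
        (Finset.mul_sum Finset.univ (fun j => W (ω j)) lam).symm
      rw [show lam * (∑ j, W (ω j) - (K : ℝ) * θ / 2)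
          = -(lam * ((K : ℝ) * θ / 2)) + ∑ j, lam * W (ω j) from by rw [hS]; ring]
      rw [Real.exp_add, Real.exp_sum, Finset.prod_mul_distrib]
      ring
    rw [Finset.sum_congr rfl fun ω _ => hfac ω, ← Finset.mul_sum]
    congr 1
    have := Finset.prod_univ_sum (fun _ : Fin K => (Finset.univ : Finset (Fin n)))
      (fun _ i => α i * Real.exp (lam * W i))
    rw [Fintype.piFinset_univ] at this
    rw [← this, Finset.prod_const, Finset.card_univ, Fintype.card_fin]
  -- step 3 : mgf bound
  have h5 : ∑ i, α i * Real.exp (lam * W i) ≤ Real.exp (lam ^ 2 / 8) := by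
    have key := mgf_bound α z hα0 hα1 hz (-(lam * c))
    have harg : ∀ i, lam * W i = (-(lam * c)) * (z i - m) := by intro i; simp [hW]; ring
    calc ∑ i, α i * Real.exp (lam * W i)
        = ∑ i, α i * Real.exp ((-(lam * c)) * (z i - m)) := by
          exact Finset.sum_congr rfl fun i _ => by rw [harg i]
      _ ≤ Real.exp ((-(lam * c)) ^ 2 / 8) := key
      _ ≤ Real.exp (lam ^ 2 / 8) := by
          apply Real.exp_le_exp.2
          have : (-(lam * c)) ^ 2 = lam ^ 2 * c ^ 2 := by ring
          rw [this]
          nlinarith [sq_nonneg lam]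
  -- combine
  have hsum_nonneg : (0:ℝ) ≤ ∑ i, α i * Real.exp (lam * W i) :=
    Finset.sum_nonneg fun i _ => mul_nonneg (hα0 i) (Real.exp_pos _).le
  calc ∑ ω ∈ Finset.univ.filter (fun ω : Fin K → Fin n =>
        (K : ℝ) * θ / 2 ≤ ∑ j, c * (m - z (ω j))), ∏ j, α (ω j)
      ≤ Real.exp (-(lam * ((K : ℝ) * θ / 2))) * (∑ i, α i * Real.exp (lam * W i)) ^ K := by
        rw [← h4]; exact h1
    _ ≤ Real.exp (-(lam * ((K : ℝ) * θ / 2))) * (Real.exp (lam ^ 2 / 8)) ^ K :=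
        mul_le_mul_of_nonneg_left (pow_le_pow_left₀ hsum_nonneg h5 K) (Real.exp_pos _).le
    _ = Real.exp (-((K : ℝ) * θ ^ 2) / 2) := by
        rw [← Real.exp_nat_mul, ← Real.exp_add]
        congr 1
        simp [hlam]
        ring

/-- Empirical-side step of the margin-based generalization analysis: the expected
`S`-probability that a random `K`-fold average `g_ω` (indices drawn i.i.d. from the
probability mass function `α`) has margin at most `θ/2` is bounded by the
`S`-probability that the convex combination `f` has margin at most `θ`, plus a
Hoeffding concentration term.  Labels take values in `{0,1}` (coded as `Fin 2` with the
discrete σ-algebra) and the margin of `F` at `(x,y)` is `(y - τ) * (F x - τ)`. -/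
theorem adaGNN_margin_empirical_error_step
    {X : Type*} [MeasurableSpace X]
    (n K : ℕ) (hn : 1 ≤ n) (hK : 1 ≤ K)
    (s : Fin n → X → ℝ) (hmeas : ∀ i, Measurable (s i))
    (hs : ∀ i x, s i x ∈ Set.Icc (0 : ℝ) 1)
    (α : Fin n → ℝ) (hα0 : ∀ i, 0 ≤ α i) (hα1 : ∑ i, α i = 1)
    (f : X → ℝ) (hf : ∀ x, f x = ∑ i, α i * s i x)
    (g : (Fin K → Fin n) → X → ℝ)
    (hg : ∀ ω x, g ω x = (1 / (K : ℝ)) * ∑ j, s (ω j) x)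
    (S : Measure (X × Fin 2)) [IsProbabilityMeasure S]
    (τ : ℝ) (hτ : τ ∈ Set.Ioo (0 : ℝ) 1)
    (margin : (X → ℝ) → X × Fin 2 → ℝ)
    (hmargin : ∀ F p, margin F p = (((p.2 : ℕ) : ℝ) - τ) * (F p.1 - τ))
    (μ : Measure (Fin K → Fin n))
    (hμ : μ = Measure.pi fun _ : Fin K =>
      ∑ i : Fin n, ENNReal.ofReal (α i) • Measure.dirac i)
    (θ : ℝ) (hθ : 0 < θ) :
    (∫⁻ ω, S {p | margin (g ω) p ≤ θ / 2} ∂μ) ≤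
      S {p | margin f p ≤ θ} +
        ENNReal.ofReal (Real.exp (-(K * θ ^ 2) / 2)) := by
  classical
  have hKpos : (0:ℝ) < K := by exact_mod_cast hK
  set ν : Measure (Fin n) := ∑ i : Fin n, ENNReal.ofReal (α i) • Measure.dirac i with hν
  -- singleton values of ν
  have hνsing : ∀ i : Fin n, ν {i} = ENNReal.ofReal (α i) := by
    intro i
    rw [hν]
    rw [show ((∑ k : Fin n, ENNReal.ofReal (α k) • Measure.dirac k : Measure (Fin n)) {i})
        = ∑ k : Fin n, ENNReal.ofReal (α k) * Measure.dirac k {i} from by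
      rw [Measure.coe_finset_sum]; simp [Measure.smul_apply, smul_eq_mul]]
    rw [Finset.sum_eq_single i]
    · simp [Measure.dirac_apply]
    · intro k _ hk
      simp [Measure.dirac_apply, Set.indicator_apply, hk]
    · simp
  have hνprob : IsProbabilityMeasure ν := by
    constructor
    have huniv : ν Set.univ = ∑ k : Fin n, ENNReal.ofReal (α k) := by
      rw [hν, show ((∑ k : Fin n, ENNReal.ofReal (α k) • Measure.dirac k : Measure (Fin n)) Set.univ)
          = ∑ k : Fin n, ENNReal.ofReal (α k) * Measure.dirac k Set.univ from by
        rw [Measure.coe_finset_sum]; simp [Measure.smul_apply, smul_eq_mul]]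
      simp [Measure.dirac_apply]
    rw [huniv, ← ENNReal.ofReal_sum_of_nonneg fun i _ => hα0 i, hα1, ENNReal.ofReal_one]
  haveI := hνprob
  -- singleton values of μ
  have hμsing : ∀ ω : Fin K → Fin n, μ {ω} = ∏ j, ENNReal.ofReal (α (ω j)) := by
    intro ω
    rw [hμ, show ({ω} : Set (Fin K → Fin n)) = Set.pi Set.univ (fun j => {ω j}) from by
      rw [Set.univ_pi_singleton]]
    rw [Measure.pi_pi]
    exact Finset.prod_congr rfl fun j _ => hνsing (ω j)
  have hμprob : IsProbabilityMeasure μ := by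
    rw [hμ]; infer_instance
  haveI := hμprob
  -- measurability
  have hmeasf : Measurable f := by
    have : f = fun x => ∑ i, α i * s i x := funext hf
    rw [this]
    exact Finset.measurable_sum _ fun i _ => (hmeas i).const_mul (α i)
  have hmeasg : ∀ ω, Measurable (g ω) := by
    intro ω
    have : g ω = fun x => (1 / (K : ℝ)) * ∑ j, s (ω j) x := funext (hg ω)
    rw [this]
    exact (Finset.measurable_sum _ fun j _ => (hmeas (ω j))).const_mul _
  have hmeasmargin : ∀ F : X → ℝ, Measurable F → Measurable (margin F) := by
    intro F hF
    have : margin F = fun p : X × Fin 2 => (((p.2 : ℕ) : ℝ) - τ) * (F p.1 - τ) :=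
      funext (hmargin F)
    rw [this]
    apply Measurable.mul
    · exact (measurable_from_top (f := fun y : Fin 2 => ((y : ℕ) : ℝ) - τ)).comp measurable_snd
    · exact ((hF.comp measurable_fst).sub measurable_const)
  set B : Set (X × Fin 2) := {p | margin f p ≤ θ} with hB
  set A : (Fin K → Fin n) → Set (X × Fin 2) := fun ω => {p | margin (g ω) p ≤ θ / 2} with hA
  have hmeasB : MeasurableSet B := measurableSet_le (hmeasmargin f hmeasf) measurable_const
  have hmeasA : ∀ ω, MeasurableSet (A ω) := fun ω =>
    measurableSet_le (hmeasmargin _ (hmeasg ω)) measurable_const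
  set C : (Fin K → Fin n) → Set (X × Fin 2) := fun ω => A ω ∩ Bᶜ with hC
  have hmeasC : ∀ ω, MeasurableSet (C ω) := fun ω => (hmeasA ω).inter hmeasB.compl
  -- step 1 : split off B
  have hsplit : ∀ ω, S (A ω) ≤ S B + S (C ω) := by
    intro ω
    calc S (A ω) ≤ S (B ∪ C ω) := measure_mono (by
      intro p hp
      by_cases hpB : p ∈ B
      · exact Or.inl hpB
      · exact Or.inr ⟨hp, hpB⟩)
    _ ≤ S B + S (C ω) := measure_union_le _ _
  -- convert lintegral to finite sum
  rw [lintegral_fintype]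
  have hsum1 : ∑ ω : Fin K → Fin n, μ {ω} = 1 := by
    have h1 := lintegral_fintype (μ := μ) (fun _ => (1:ENNReal))
    simp only [one_mul, lintegral_one, measure_univ] at h1
    exact h1.symm
  -- pointwise bound for the error term
  have hpointwise : ∀ p : X × Fin 2,
      ∑ ω : Fin K → Fin n, μ {ω} * (C ω).indicator 1 p
        ≤ ENNReal.ofReal (Real.exp (-((K:ℝ) * θ ^ 2) / 2)) := by
    intro p
    by_cases hpB : p ∈ B
    · have : ∀ ω, (C ω).indicator (1 : X × Fin 2 → ENNReal) p = 0 := by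
        intro ω
        apply Set.indicator_of_notMem
        intro hpc
        exact hpc.2 hpB
      simp [this]
    · -- p outside B : use Chernoff
      have hpB' : θ < margin f p := by
        simpa [hB] using hpB
      set x := p.1
      set c : ℝ := ((p.2 : ℕ) : ℝ) - τ with hc
      set z : Fin n → ℝ := fun i => s i x with hz
      have hzIcc : ∀ i, z i ∈ Set.Icc (0:ℝ) 1 := fun i => hs i x
      have hfx : f x = ∑ i, α i * z i := hf x
      have hcsq : c ^ 2 ≤ 1 := by
        obtain ⟨hτ0, hτ1⟩ := hτ
        have hlt := p.2.isLt
        have hy : ((p.2 : ℕ) : ℝ) = 0 ∨ ((p.2 : ℕ) : ℝ) = 1 := by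
          have : (p.2 : ℕ) = 0 ∨ (p.2 : ℕ) = 1 := by omega
          rcases this with h | h
          · left; exact_mod_cast h
          · right; exact_mod_cast h
        rcases hy with h | h <;> rw [hc, h] <;> nlinarith
      -- inclusion of events
      have hincl : ∀ ω : Fin K → Fin n, p ∈ A ω →
          (K : ℝ) * θ / 2 ≤ ∑ j, c * ((∑ i, α i * z i) - z (ω j)) := by
        intro ω hω
        have h1 : c * (g ω x - τ) ≤ θ / 2 := by
          have := hω
          simp only [hA, Set.mem_setOf_eq, hmargin] at this
          exact this
        have h2 : θ < c * (f x - τ) := by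
          rw [hmargin] at hpB'
          exact hpB'
        have hgx : (K : ℝ) * g ω x = ∑ j, z (ω j) := by
          rw [hg]
          field_simp
          rfl
        have hsum : ∑ j, c * ((∑ i, α i * z i) - z (ω j))
            = (K : ℝ) * (c * (f x - τ)) - (K : ℝ) * (c * (g ω x - τ)) := by
          rw [Finset.sum_congr rfl (fun j _ => by ring :
            ∀ j ∈ Finset.univ, c * ((∑ i, α i * z i) - z (ω j))
              = c * (∑ i, α i * z i) - c * z (ω j))]
          rw [Finset.sum_sub_distrib, Finset.sum_const, ← Finset.mul_sum, ← hgx]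
          simp [hfx, Finset.card_univ]
          ring
        rw [hsum]
        have e1 : (K:ℝ) * θ ≤ (K:ℝ) * (c * (f x - τ)) :=
          mul_le_mul_of_nonneg_left h2.le hKpos.le
        have e2 : (K:ℝ) * (c * (g ω x - τ)) ≤ (K:ℝ) * (θ / 2) :=
          mul_le_mul_of_nonneg_left h1 hKpos.le
        have e3 : (K:ℝ) * θ - (K:ℝ) * (θ / 2) = (K:ℝ) * θ / 2 := by ring
        clear_value x c z
        linarith
      -- compute the sum
      have hval : ∑ ω : Fin K → Fin n, μ {ω} * (C ω).indicator 1 p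
          = ∑ ω ∈ Finset.univ.filter (fun ω : Fin K → Fin n => p ∈ A ω), μ {ω} := by
        rw [Finset.sum_filter]
        apply Finset.sum_congr rfl
        intro ω _
        by_cases hω : p ∈ A ω
        · have hpc : p ∈ C ω := ⟨hω, hpB⟩
          simp [hω, Set.indicator_of_mem hpc]
        · have hpc : p ∉ C ω := fun hpc => hω hpc.1
          simp [hω, Set.indicator_of_notMem hpc]
      rw [hval]
      have hval2 : ∑ ω ∈ Finset.univ.filter (fun ω : Fin K → Fin n => p ∈ A ω), μ {ω}
          = ENNReal.ofReal (∑ ω ∈ Finset.univ.filter (fun ω : Fin K → Fin n => p ∈ A ω),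
              ∏ j, α (ω j)) := by
        rw [ENNReal.ofReal_sum_of_nonneg fun ω _ => Finset.prod_nonneg fun j _ => hα0 (ω j)]
        exact Finset.sum_congr rfl fun ω _ => by
          rw [hμsing ω, ENNReal.ofReal_prod_of_nonneg fun j _ => hα0 (ω j)]
      rw [hval2]
      apply ENNReal.ofReal_le_ofReal
      calc ∑ ω ∈ Finset.univ.filter (fun ω : Fin K → Fin n => p ∈ A ω), ∏ j, α (ω j)
          ≤ ∑ ω ∈ Finset.univ.filter (fun ω : Fin K → Fin n =>
              (K : ℝ) * θ / 2 ≤ ∑ j, c * ((∑ i, α i * z i) - z (ω j))), ∏ j, α (ω j) := by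
            apply Finset.sum_le_sum_of_subset_of_nonneg
            · intro ω hω
              rw [Finset.mem_filter] at hω ⊢
              exact ⟨hω.1, hincl ω hω.2⟩
            · intro ω _ _
              exact Finset.prod_nonneg fun j _ => hα0 (ω j)
        _ ≤ Real.exp (-((K:ℝ) * θ ^ 2) / 2) := chernoff α hα0 hα1 z hzIcc c θ hθ hcsq
  -- main chain
  calc ∑ ω : Fin K → Fin n, S (A ω) * μ {ω}
      ≤ ∑ ω : Fin K → Fin n, (S B + S (C ω)) * μ {ω} :=
        Finset.sum_le_sum fun ω _ => mul_le_mul_left (hsplit ω) _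
    _ = S B * ∑ ω : Fin K → Fin n, μ {ω} + ∑ ω : Fin K → Fin n, S (C ω) * μ {ω} := by
        rw [Finset.mul_sum, ← Finset.sum_add_distrib]
        exact Finset.sum_congr rfl fun ω _ => by ring
    _ = S B + ∑ ω : Fin K → Fin n, S (C ω) * μ {ω} := by rw [hsum1, mul_one]
    _ ≤ S B + ENNReal.ofReal (Real.exp (-((K:ℝ) * θ ^ 2) / 2)) := by
        apply add_le_add_right
        have hrw : ∀ ω, S (C ω) * μ {ω} = ∫⁻ p, μ {ω} * (C ω).indicator 1 p ∂S := by
          intro ω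
          rw [lintegral_const_mul _ (measurable_one.indicator (hmeasC ω)),
            lintegral_indicator_one (hmeasC ω), mul_comm]
        calc ∑ ω : Fin K → Fin n, S (C ω) * μ {ω}
            = ∫⁻ p, ∑ ω : Fin K → Fin n, μ {ω} * (C ω).indicator 1 p ∂S := by
              rw [lintegral_finset_sum _ fun ω _ =>
                (measurable_one.indicator (hmeasC ω)).const_mul _]
              exact Finset.sum_congr rfl fun ω _ => hrw ω
          _ ≤ ∫⁻ _, ENNReal.ofReal (Real.exp (-((K:ℝ) * θ ^ 2) / 2)) ∂S :=
              lintegral_mono fun p => hpointwise p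
          _ = ENNReal.ofReal (Real.exp (-((K:ℝ) * θ ^ 2) / 2)) := by
              simp [measure_univ]
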